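/- Let (Ω, Σ, μ) be a finite measure space, E a separable Banach space, m : Σ → E a μ-continuous vector measure, and ≿ a preference relation on Σ admitting a vector representation via m (i.e., m(A) = m(B) implies A ∼ B) and satisfying continuity: whenever A^k ≿ B for all k and m(A^k) → m(A) then A ≿ B, and whenever A ≿ B^k for all k and m(B^k) → m(B) then A ≿ B. Then there exists a continuous function φ : m(Σ) → ℝ with φ(0) = 0 such that for all A, B ∈ Σ: A ≿ B if and only if φ(m(A)) ≥ φ(m(B)). -/

import Mathlib

open MeasureTheory Filter

/-- The σ-algebra `Σ`, viewed as the type of measurable subsets of `Ω`. -/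
abbrev MSet (Ω : Type*) [MeasurableSpace Ω] := {A : Set Ω // MeasurableSet A}


section Stmt6Aux
open Set

namespace DebreuAux

variable {X : Type*}

/-- The strict relation associated to a total preorder-like relation. -/
def slt (le : X → X → Prop) (x y : X) : Prop := ¬ le y x

/-- `le` is a total transitive relation. -/
structure IsPref (le : X → X → Prop) : Prop where
  tot : ∀ x y, le x y ∨ le y x
  tr : ∀ x y z, le x y → le y z → le x z

namespace IsPref

variable {le : X → X → Prop}

lemma rfl' (P : IsPref le) (x : X) : le x x := (P.tot x x).elim id id

lemma slt_le (P : IsPref le) {x y : X} (h : slt le x y) : le x y := (P.tot x y).resolve_right h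

lemma le_slt_trans (P : IsPref le) {x y z : X} (h : le x y) (h' : slt le y z) : slt le x z :=
  fun hzx => h' (P.tr _ _ _ hzx h)

lemma slt_le_trans (P : IsPref le) {x y z : X} (h : slt le x y) (h' : le y z) : slt le x z :=
  fun hzx => h (P.tr _ _ _ h' hzx)

lemma slt_trans (P : IsPref le) {x y z : X} (h : slt le x y) (h' : slt le y z) : slt le x z :=
  P.slt_le_trans h (P.slt_le h')

lemma slt_asymm (P : IsPref le) {x y : X} (h : slt le x y) (h' : slt le y x) : False :=
  (P.tot x y).elim h' h

end IsPref


section Chain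

variable (le : X → X → Prop)

open Classical in
/-- A chosen point strictly between `p` and `q`, when one exists (junk value `b` otherwise). -/
noncomputable def btwn (b : X) (p q : X) : X :=
  if h : ∃ e, slt le p e ∧ slt le e q then h.choose else b

/-- A dyadic chain from `a` to `b`: `chain le a b n k` is the point at position `k / 2^n`. -/
noncomputable def chain (a b : X) : ℕ → ℕ → X
  | 0, k => if k = 0 then a else b
  | n + 1, k =>
    if k % 2 = 0 then chain a b n (k / 2)
    else btwn le b (chain a b n (k / 2)) (chain a b n (k / 2 + 1))

variable {le} {a b : X}

lemma chain_zero_left : ∀ n, chain le a b n 0 = a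
  | 0 => by simp [chain]
  | n + 1 => by simp [chain, chain_zero_left n]

lemma chain_two_pow : ∀ n, chain le a b n (2 ^ n) = b
  | 0 => by norm_num [chain]
  | n + 1 => by
      have h1 : 2 ^ (n + 1) % 2 = 0 := by
        simp [pow_succ, Nat.mul_mod_left]
      have h2 : 2 ^ (n + 1) / 2 = 2 ^ n := by
        rw [pow_succ]; exact Nat.mul_div_cancel _ (by norm_num)
      simp only [chain, h1, if_true, h2, chain_two_pow n]

lemma chain_even {n k : ℕ} : chain le a b (n + 1) (2 * k) = chain le a b n k := by
  have h1 : (2 * k) % 2 = 0 := Nat.mul_mod_right 2 k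
  have h2 : 2 * k / 2 = k := by omega
  simp only [chain, h1, if_true, h2]

lemma chain_odd {n k : ℕ} :
    chain le a b (n + 1) (2 * k + 1) =
      btwn le b (chain le a b n k) (chain le a b n (k + 1)) := by
  have h1 : (2 * k + 1) % 2 = 1 := by omega
  have h2 : (2 * k + 1) / 2 = k := by omega
  simp [chain, h1, h2]

lemma chain_spec (P : IsPref le) (hab : slt le a b)
    (hd : ∀ p q, le a p → slt le p q → le q b → ∃ e, slt le p e ∧ slt le e q) (n : ℕ) :
    (∀ k, k ≤ 2 ^ n → le a (chain le a b n k) ∧ le (chain le a b n k) b) ∧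
    (∀ k, k + 1 ≤ 2 ^ n → slt le (chain le a b n k) (chain le a b n (k + 1))) := by
  induction n with
  | zero =>
    constructor
    · intro k hk
      interval_cases k
      · simpa [chain] using ⟨P.rfl' a, P.slt_le hab⟩
      · simpa [chain] using ⟨P.slt_le hab, P.rfl' b⟩
    · intro k hk
      have hk0 : k = 0 := by omega
      subst hk0
      simpa [chain] using hab
  | succ n ih =>
    have hbtw : ∀ j, j + 1 ≤ 2 ^ n →
        slt le (chain le a b n j) (btwn le b (chain le a b n j) (chain le a b n (j + 1))) ∧
        slt le (btwn le b (chain le a b n j) (chain le a b n (j + 1))) (chain le a b n (j + 1)) := by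
      intro j hj
      have hpq := ih.2 j hj
      have hb1 := (ih.1 j (by omega)).1
      have hb2 := (ih.1 (j + 1) hj).2
      have hex := hd _ _ hb1 hpq hb2
      rw [btwn, dif_pos hex]
      exact hex.choose_spec
    have hpow : 2 ^ (n + 1) = 2 * 2 ^ n := by rw [pow_succ]; ring
    constructor
    · intro k hk
      rcases Nat.even_or_odd k with ⟨j, hj⟩ | ⟨j, hj⟩
      · have hj' : k = 2 * j := by omega
        subst hj'
        rw [chain_even]
        exact ih.1 j (by omega)
      · have hj' : k = 2 * j + 1 := by omega
        subst hj'
        rw [chain_odd]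
        have hjn : j + 1 ≤ 2 ^ n := by omega
        obtain ⟨h1, h2⟩ := hbtw j hjn
        have hb1 := (ih.1 j (by omega)).1
        have hb2 := (ih.1 (j + 1) hjn).2
        exact ⟨P.tr _ _ _ hb1 (P.slt_le h1), P.tr _ _ _ (P.slt_le h2) hb2⟩
    · intro k hk
      rcases Nat.even_or_odd k with ⟨j, hj⟩ | ⟨j, hj⟩
      · have hj' : k = 2 * j := by omega
        subst hj'
        have hjn : j + 1 ≤ 2 ^ n := by omega
        rw [chain_even, show 2 * j + 1 = 2 * j + 1 from rfl, chain_odd]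
        exact (hbtw j hjn).1
      · have hj' : k = 2 * j + 1 := by omega
        subst hj'
        have hjn : j + 1 ≤ 2 ^ n := by omega
        rw [chain_odd, show 2 * j + 1 + 1 = 2 * (j + 1) from by ring, chain_even]
        exact (hbtw j hjn).2

lemma chain_strict (P : IsPref le) (hab : slt le a b)
    (hd : ∀ p q, le a p → slt le p q → le q b → ∃ e, slt le p e ∧ slt le e q)
    {n k l : ℕ} (hkl : k < l) (hl : l ≤ 2 ^ n) :
    slt le (chain le a b n k) (chain le a b n l) := by
  induction l with
  | zero => omega
  | succ l ihl =>
    rcases Nat.lt_or_ge k l with h | h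
    · exact P.slt_trans (ihl h (by omega)) ((chain_spec P hab hd n).2 l hl)
    · have : k = l := by omega
      subst this
      exact (chain_spec P hab hd n).2 k hl

lemma chain_lift (n m k : ℕ) : chain le a b (n + m) (k * 2 ^ m) = chain le a b n k := by
  induction m with
  | zero => simp
  | succ m ihm =>
    have : k * 2 ^ (m + 1) = 2 * (k * 2 ^ m) := by ring
    rw [show n + (m + 1) = (n + m) + 1 from rfl, this, chain_even, ihm]

lemma chain_cross (P : IsPref le) (hab : slt le a b)
    (hd : ∀ p q, le a p → slt le p q → le q b → ∃ e, slt le p e ∧ slt le e q)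
    {n k m l : ℕ} (hl : l ≤ 2 ^ m) (h : k * 2 ^ m < l * 2 ^ n) :
    slt le (chain le a b n k) (chain le a b m l) := by
  have e1 : chain le a b n k = chain le a b (n + m) (k * 2 ^ m) := (chain_lift n m k).symm
  have e2 : chain le a b m l = chain le a b (n + m) (l * 2 ^ n) := by
    rw [Nat.add_comm]; exact (chain_lift m n l).symm
  rw [e1, e2]
  refine chain_strict P hab hd h ?_
  calc l * 2 ^ n ≤ 2 ^ m * 2 ^ n := Nat.mul_le_mul_right _ hl
    _ = 2 ^ (n + m) := by rw [← pow_add, Nat.add_comm]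

end Chain


section ChainFun

variable (le : X → X → Prop) (a b : X)

/-- The dyadic-chain utility function attached to `a ≺ b`. -/
noncomputable def chainFun (x : X) : ℝ :=
  sSup (insert 0 {r : ℝ | ∃ n k : ℕ, k ≤ 2 ^ n ∧ le (chain le a b n k) x ∧ r = (k : ℝ) / 2 ^ n})

variable {le a b}

lemma chainFun_set_le_one {x : X} :
    ∀ r ∈ insert 0 {r : ℝ | ∃ n k : ℕ, k ≤ 2 ^ n ∧ le (chain le a b n k) x ∧ r = (k : ℝ) / 2 ^ n},
      r ≤ 1 := by
  rintro r (rfl | ⟨n, k, hk, -, rfl⟩)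
  · norm_num
  · rw [div_le_one (by positivity)]
    exact_mod_cast hk

lemma chainFun_bddAbove {x : X} :
    BddAbove (insert 0 {r : ℝ | ∃ n k : ℕ, k ≤ 2 ^ n ∧ le (chain le a b n k) x ∧ r = (k : ℝ) / 2 ^ n}) :=
  ⟨1, fun r hr => chainFun_set_le_one r hr⟩

lemma chainFun_nonneg (x : X) : 0 ≤ chainFun le a b x :=
  le_csSup chainFun_bddAbove (mem_insert _ _)

lemma chainFun_le_one (x : X) : chainFun le a b x ≤ 1 :=
  csSup_le ⟨0, mem_insert _ _⟩ chainFun_set_le_one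

lemma chainFun_mono (P : IsPref le) {x y : X} (h : le x y) :
    chainFun le a b x ≤ chainFun le a b y := by
  apply csSup_le_csSup chainFun_bddAbove ⟨0, mem_insert _ _⟩
  rintro r (rfl | ⟨n, k, hk, hle, rfl⟩)
  · exact mem_insert _ _
  · exact mem_insert_of_mem _ ⟨n, k, hk, P.tr _ _ _ hle h, rfl⟩

lemma chainFun_le_of_mem (P : IsPref le) {x : X} {n k : ℕ} (hk : k ≤ 2 ^ n)
    (h : le (chain le a b n k) x) : (k : ℝ) / 2 ^ n ≤ chainFun le a b x :=
  le_csSup chainFun_bddAbove (mem_insert_of_mem _ ⟨n, k, hk, h, rfl⟩)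

lemma chainFun_eq_zero (P : IsPref le) (hab : slt le a b)
    (hd : ∀ p q, le a p → slt le p q → le q b → ∃ e, slt le p e ∧ slt le e q)
    {x : X} (h : le x a) : chainFun le a b x = 0 := by
  refine le_antisymm (csSup_le ⟨0, mem_insert _ _⟩ ?_) (chainFun_nonneg x)
  rintro r (rfl | ⟨n, k, hk, hle, rfl⟩)
  · exact le_refl 0
  · rcases Nat.eq_zero_or_pos k with rfl | hkpos
    · simp
    · exfalso
      have hstrict : slt le (chain le a b n 0) (chain le a b n k) :=
        chain_strict P hab hd hkpos hk
      rw [chain_zero_left] at hstrict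
      exact hstrict (P.tr _ _ _ hle h)

lemma chainFun_eq_one (P : IsPref le) {x : X} (h : le b x) : chainFun le a b x = 1 := by
  refine le_antisymm (chainFun_le_one x) ?_
  have : ((1 : ℕ) : ℝ) / 2 ^ (0 : ℕ) ≤ chainFun le a b x := by
    refine chainFun_le_of_mem P (by norm_num) ?_
    have : chain le a b 0 1 = b := by simp [chain]
    rw [this]; exact h
  simpa using this

/-- Dyadic rationals are dense in `[0,1]`. -/
lemma exists_dyadic {s t : ℝ} (hs : 0 ≤ s) (hst : s < t) (ht : t ≤ 1) :
    ∃ n k : ℕ, k ≤ 2 ^ n ∧ s < (k : ℝ) / 2 ^ n ∧ (k : ℝ) / 2 ^ n < t := by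
  obtain ⟨n, hn⟩ := exists_pow_lt_of_lt_one (sub_pos.2 hst) (by norm_num : (1 : ℝ) / 2 < 1)
  have h2 : (0 : ℝ) < 2 ^ n := by positivity
  have hn' : 1 / (2 : ℝ) ^ n < t - s := by
    calc 1 / (2 : ℝ) ^ n = (1 / 2) ^ n := by rw [div_pow, one_pow]
      _ < t - s := hn
  have hfl : (⌊s * 2 ^ n⌋₊ : ℝ) ≤ s * 2 ^ n := Nat.floor_le (by positivity)
  have key : s * 2 ^ n + 1 < t * 2 ^ n := by
    have h1 : 1 < (t - s) * 2 ^ n := by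
      rw [div_lt_iff₀ h2] at hn'
      linarith
    nlinarith
  have ht2 : t * 2 ^ n ≤ 2 ^ n := by nlinarith
  refine ⟨n, ⌊s * 2 ^ n⌋₊ + 1, ?_, ?_, ?_⟩
  · have : ((⌊s * 2 ^ n⌋₊ + 1 : ℕ) : ℝ) ≤ ((2 ^ n : ℕ) : ℝ) := by
      push_cast
      linarith
    exact_mod_cast this
  · rw [lt_div_iff₀ h2]
    push_cast
    exact Nat.lt_floor_add_one _
  · rw [div_lt_iff₀ h2]
    push_cast
    linarith

end ChainFun


section Continuity

variable [TopologicalSpace X] {le : X → X → Prop} {a b : X}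

lemma chainFun_continuous (P : IsPref le) (hab : slt le a b)
    (hd : ∀ p q, le a p → slt le p q → le q b → ∃ e, slt le p e ∧ slt le e q)
    (hopen₁ : ∀ c : X, IsOpen {x | slt le c x}) (hopen₂ : ∀ c : X, IsOpen {x | slt le x c}) :
    Continuous (chainFun le a b) := by
  rw [continuous_iff_lower_upperSemicontinuous]
  constructor
  · rw [lowerSemicontinuous_iff_isOpen_preimage]
    intro α
    rcases lt_or_ge α 0 with hα | hα
    · have : chainFun le a b ⁻¹' Ioi α = univ :=
        eq_univ_of_forall fun x => lt_of_lt_of_le hα (chainFun_nonneg x)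
      rw [this]; exact isOpen_univ
    · have : chainFun le a b ⁻¹' Ioi α =
          ⋃ n : ℕ, ⋃ k : ℕ, ⋃ (_ : k ≤ 2 ^ n ∧ α < (k : ℝ) / 2 ^ n),
            {x | slt le (chain le a b n k) x} := by
        ext x
        simp only [mem_preimage, mem_Ioi, mem_iUnion, mem_setOf_eq]
        constructor
        · intro hx
          obtain ⟨r, hr, hαr⟩ := exists_lt_of_lt_csSup ⟨0, mem_insert _ _⟩ hx
          rcases hr with rfl | ⟨n, k, hk, hle, rfl⟩
          · exact absurd hαr (not_lt.2 hα)
          · have hk1 : (k : ℝ) / 2 ^ n ≤ 1 := by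
              rw [div_le_one (by positivity)]; exact_mod_cast hk
            obtain ⟨n', k', hk', h1, h2⟩ := exists_dyadic hα hαr hk1
            refine ⟨n', k', ⟨hk', h1⟩, ?_⟩
            have hcross : slt le (chain le a b n' k') (chain le a b n k) := by
              refine chain_cross P hab hd hk ?_
              have := (div_lt_div_iff₀ (by positivity : (0:ℝ) < 2 ^ n') (by positivity : (0:ℝ) < 2 ^ n)).1 h2
              exact_mod_cast this
            exact P.slt_le_trans hcross hle
        · rintro ⟨n, k, ⟨hk, hα'⟩, hx⟩
          exact lt_of_lt_of_le hα' (chainFun_le_of_mem P hk (P.slt_le hx))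
      rw [this]
      exact isOpen_iUnion fun _ => isOpen_iUnion fun _ => isOpen_iUnion fun _ => hopen₁ _
  · rw [upperSemicontinuous_iff_isOpen_preimage]
    intro α
    rcases lt_or_ge 1 α with hα | hα
    · have : chainFun le a b ⁻¹' Iio α = univ :=
        eq_univ_of_forall fun x => lt_of_le_of_lt (chainFun_le_one x) hα
      rw [this]; exact isOpen_univ
    · have : chainFun le a b ⁻¹' Iio α =
          ⋃ n : ℕ, ⋃ k : ℕ, ⋃ (_ : k ≤ 2 ^ n ∧ (k : ℝ) / 2 ^ n < α),
            {x | slt le x (chain le a b n k)} := by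
        ext x
        simp only [mem_preimage, mem_Iio, mem_iUnion, mem_setOf_eq]
        constructor
        · intro hx
          obtain ⟨n, k, hk, h1, h2⟩ := exists_dyadic (chainFun_nonneg x) hx hα
          refine ⟨n, k, ⟨hk, h2⟩, ?_⟩
          intro hcontra
          exact absurd (chainFun_le_of_mem P hk hcontra) (not_le.2 h1)
        · rintro ⟨n, k, ⟨hk, hα'⟩, hx⟩
          refine lt_of_le_of_lt (csSup_le ⟨0, mem_insert _ _⟩ ?_) hα'
          rintro r (rfl | ⟨n', k', hk', hle, rfl⟩)
          · positivity
          · by_contra hgt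
            push_neg at hgt
            have hcross : slt le (chain le a b n k) (chain le a b n' k') := by
              refine chain_cross P hab hd hk' ?_
              have := (div_lt_div_iff₀ (by positivity : (0:ℝ) < 2 ^ n) (by positivity : (0:ℝ) < 2 ^ n')).1 hgt
              exact_mod_cast this
            exact P.slt_asymm hcross (P.le_slt_trans hle hx)
      rw [this]
      exact isOpen_iUnion fun _ => isOpen_iUnion fun _ => isOpen_iUnion fun _ => hopen₂ _

end Continuity

section JumpFun

variable {le : X → X → Prop}

open Classical in
/-- Indicator utility of the (clopen) upper set of the top of a jump. -/
noncomputable def jumpFun (le : X → X → Prop) (q : X) (x : X) : ℝ :=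
  if le q x then 1 else 0

lemma jumpFun_nonneg (q x : X) : 0 ≤ jumpFun le q x := by
  unfold jumpFun; split <;> norm_num

lemma jumpFun_le_one (q x : X) : jumpFun le q x ≤ 1 := by
  unfold jumpFun; split <;> norm_num

lemma jumpFun_mono (P : IsPref le) {x y : X} (q : X) (h : le x y) :
    jumpFun le q x ≤ jumpFun le q y := by
  unfold jumpFun
  by_cases hq : le q x
  · rw [if_pos hq, if_pos (P.tr _ _ _ hq h)]
  · rw [if_neg hq]; split <;> norm_num

lemma jumpFun_continuous [TopologicalSpace X] {q : X}
    (hopen : IsOpen {x | le q x}) (hclosed : IsClosed {x | le q x}) :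
    Continuous (jumpFun le q) := by
  classical
  rw [continuous_def]
  intro s hs
  have : jumpFun le q ⁻¹' s =
      (if (1 : ℝ) ∈ s then {x | le q x} else ∅) ∪
      (if (0 : ℝ) ∈ s then {x | le q x}ᶜ else ∅) := by
    ext x
    by_cases hqx : le q x <;> by_cases h1 : (1 : ℝ) ∈ s <;> by_cases h0 : (0 : ℝ) ∈ s <;>
      simp [jumpFun, hqx, h1, h0]
  rw [this]
  apply IsOpen.union <;> split_ifs <;>
    simp [hopen, hclosed.isOpen_compl, isOpen_empty]

end JumpFun


/-- **Debreu's continuous utility representation theorem** for second countable metric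
spaces: a total transitive relation with closed upper and lower contour sets admits a
continuous real-valued representation. -/
theorem debreu {X : Type*} [MetricSpace X] [SecondCountableTopology X]
    [Nonempty X] {le : X → X → Prop} (P : IsPref le)
    (hcu : ∀ x : X, IsClosed {y | le x y}) (hcl : ∀ x : X, IsClosed {y | le y x}) :
    ∃ u : X → ℝ, Continuous u ∧ ∀ x y, le x y ↔ u x ≤ u y := by
  classical
  have hopen₁ : ∀ c : X, IsOpen {x | slt le c x} := fun c => (hcl c).isOpen_compl
  have hopen₂ : ∀ c : X, IsOpen {x | slt le x c} := fun c => (hcu c).isOpen_compl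
  set d : ℕ → X := TopologicalSpace.denseSeq X with hd_def
  have hd : DenseRange d := TopologicalSpace.denseRange_denseSeq X
  -- jumps
  set Jmp : X → X → Prop := fun p q => slt le p q ∧ ∀ z, le z p ∨ le q z with hJmp_def
  have hjump_open : ∀ p q : X, Jmp p q → {z | le q z} = {z | slt le p z} := by
    intro p q hJ
    ext z
    simp only [mem_setOf_eq]
    constructor
    · intro h hzp
      exact hJ.1 (P.tr _ _ _ h hzp)
    · intro h
      exact ((hJ.2 z).resolve_left h)
  -- the countable family of jump conditions
  set JC : ℕ × ℕ → Prop := fun nm =>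
    ∃ q : X, (∃ p, Jmp p q) ∧ q ∈ Metric.ball (d nm.1) (1 / (nm.2 + 1)) ∧
      Metric.ball (d nm.1) (1 / (nm.2 + 1)) ⊆ {z | le q z} with hJC_def
  -- every jump is equivalent to a chosen one
  have hcov : ∀ p q : X, Jmp p q → ∃ nm : ℕ × ℕ, ∃ h : JC nm,
      le h.choose q ∧ le q h.choose := by
    intro p q hJ
    have hUopen : IsOpen {z | le q z} := by rw [hjump_open p q hJ]; exact hopen₁ p
    obtain ⟨ε, hε, hball⟩ := Metric.isOpen_iff.1 hUopen q (P.rfl' q)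
    obtain ⟨m, hm⟩ := exists_nat_one_div_lt (half_pos hε)
    have hmpos : (0 : ℝ) < 1 / (m + 1) := by positivity
    obtain ⟨n, hn⟩ := hd.exists_mem_open Metric.isOpen_ball
      ⟨q, Metric.mem_ball_self hmpos⟩
    have hqball : q ∈ Metric.ball (d n) (1 / (m + 1)) := by
      rw [Metric.mem_ball, dist_comm]
      exact hn
    have hsub : Metric.ball (d n) (1 / (m + 1)) ⊆ {z | le q z} := by
      intro z hz
      apply hball
      rw [Metric.mem_ball]
      calc dist z q ≤ dist z (d n) + dist (d n) q := dist_triangle _ _ _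
        _ < 1 / (m + 1) + 1 / (m + 1) := add_lt_add hz (Metric.mem_ball.1 hn)
        _ < ε := by linarith
    have hJCnm : JC (n, m) := ⟨q, ⟨p, hJ⟩, hqball, hsub⟩
    refine ⟨(n, m), hJCnm, ?_, ?_⟩
    · exact hJCnm.choose_spec.2.2 hqball
    · exact hsub hJCnm.choose_spec.2.1
  -- pair conditions
  set PC : ℕ × ℕ → Prop := fun ij =>
    slt le (d ij.1) (d ij.2) ∧
    ∀ p q, le (d ij.1) p → slt le p q → le q (d ij.2) →
      ∃ e, slt le p e ∧ slt le e q with hPC_def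
  -- the two families of functions
  set G1 : ℕ × ℕ → X → ℝ := fun nm =>
    if h : JC nm then jumpFun le h.choose else fun _ => 0 with hG1_def
  set G2 : ℕ × ℕ → X → ℝ := fun ij =>
    if h : PC ij then chainFun le (d ij.1) (d ij.2) else fun _ => 0 with hG2_def
  set G : (ℕ × ℕ) ⊕ (ℕ × ℕ) → X → ℝ := Sum.elim G1 G2 with hG_def
  have hG0 : ∀ i x, 0 ≤ G i x := by
    rintro (nm | ij) x
    · simp only [hG_def, Sum.elim_inl, hG1_def]
      split_ifs with h
      · exact jumpFun_nonneg _ _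
      · exact le_refl 0
    · simp only [hG_def, Sum.elim_inr, hG2_def]
      split_ifs with h
      · exact chainFun_nonneg x
      · exact le_refl 0
  have hG1' : ∀ i x, G i x ≤ 1 := by
    rintro (nm | ij) x
    · simp only [hG_def, Sum.elim_inl, hG1_def]
      split_ifs with h
      · exact jumpFun_le_one _ _
      · norm_num
    · simp only [hG_def, Sum.elim_inr, hG2_def]
      split_ifs with h
      · exact chainFun_le_one x
      · norm_num
  have hGmono : ∀ i x y, le x y → G i x ≤ G i y := by
    rintro (nm | ij) x y hxy
    · simp only [hG_def, Sum.elim_inl, hG1_def]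
      split_ifs with h
      · exact jumpFun_mono P _ hxy
      · exact le_refl 0
    · simp only [hG_def, Sum.elim_inr, hG2_def]
      split_ifs with h
      · exact chainFun_mono P hxy
      · exact le_refl 0
  have hGcont : ∀ i, Continuous (G i) := by
    rintro (nm | ij)
    · simp only [hG_def, Sum.elim_inl, hG1_def]
      split_ifs with h
      · obtain ⟨⟨p, hJ⟩, -, -⟩ := h.choose_spec
        refine jumpFun_continuous ?_ (hcu _)
        rw [hjump_open p _ hJ]
        exact hopen₁ p
      · exact continuous_const
    · simp only [hG_def, Sum.elim_inr, hG2_def]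
      split_ifs with h
      · exact chainFun_continuous P h.1 h.2 hopen₁ hopen₂
      · exact continuous_const
  -- the utility
  set ε : (ℕ × ℕ) ⊕ (ℕ × ℕ) → ℝ := fun i => (1 / 2) ^ (Encodable.encode i) with hε_def
  have hεpos : ∀ i, 0 < ε i := fun i => by positivity
  have hεsum : Summable ε := summable_geometric_two_encode
  set u : X → ℝ := fun x => ∑' i, ε i * G i x with hu_def
  have hsum : ∀ x, Summable fun i => ε i * G i x := by
    intro x
    refine hεsum.of_nonneg_of_le (fun i => mul_nonneg (hεpos i).le (hG0 i x)) ?_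
    intro i
    calc ε i * G i x ≤ ε i * 1 := by
          exact mul_le_mul_of_nonneg_left (hG1' i x) (hεpos i).le
      _ = ε i := mul_one _
  have hucont : Continuous u := by
    refine continuous_tsum (fun i => continuous_const.mul (hGcont i)) hεsum ?_
    intro i x
    rw [Real.norm_eq_abs, abs_of_nonneg (mul_nonneg (hεpos i).le (hG0 i x))]
    calc ε i * G i x ≤ ε i * 1 := mul_le_mul_of_nonneg_left (hG1' i x) (hεpos i).le
      _ = ε i := mul_one _
  have humono : ∀ x y, le x y → u x ≤ u y := by
    intro x y hxy
    exact Summable.tsum_le_tsum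
      (fun i => mul_le_mul_of_nonneg_left (hGmono i x y hxy) (hεpos i).le)
      (hsum x) (hsum y)
  have hstrict : ∀ x y, slt le x y → u x < u y := by
    intro x y hxy
    obtain ⟨i₀, h0, h1⟩ : ∃ i, G i x = 0 ∧ G i y = 1 := by
      by_cases hA : ∃ p q, Jmp p q ∧ le x p ∧ le q y
      · obtain ⟨p, q, hJ, hxp, hqy⟩ := hA
        obtain ⟨nm, h, hq1, hq2⟩ := hcov p q hJ
        refine ⟨Sum.inl nm, ?_, ?_⟩
        · simp only [hG_def, Sum.elim_inl, hG1_def, dif_pos h]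
          rw [jumpFun, if_neg]
          intro hq0x
          exact hJ.1 (P.tr _ _ _ (P.tr _ _ _ hq2 hq0x) hxp)
        · simp only [hG_def, Sum.elim_inl, hG1_def, dif_pos h]
          rw [jumpFun, if_pos (P.tr _ _ _ hq1 hqy)]
      · have step : ∀ z w, le x z → slt le z w → le w y →
            ∃ e, slt le z e ∧ slt le e w := by
          intro z w h1 h2 h3
          by_contra hno
          push_neg at hno
          refine hA ⟨z, w, ⟨h2, ?_⟩, h1, h3⟩
          intro e
          by_cases hez : le e z
          · exact Or.inl hez
          · exact Or.inr (not_not.1 (hno e hez))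
        obtain ⟨w0, hw0⟩ := step x y (P.rfl' x) hxy (P.rfl' y)
        obtain ⟨j, hj⟩ : ∃ j, slt le x (d j) ∧ slt le (d j) y := by
          obtain ⟨j, hj⟩ := hd.exists_mem_open ((hopen₁ x).inter (hopen₂ y))
            ⟨w0, hw0.1, hw0.2⟩
          exact ⟨j, hj.1, hj.2⟩
        obtain ⟨w1, hw1⟩ := step x (d j) (P.rfl' x) hj.1 (P.slt_le hj.2)
        obtain ⟨i, hi⟩ : ∃ i, slt le x (d i) ∧ slt le (d i) (d j) := by
          obtain ⟨i, hi⟩ := hd.exists_mem_open ((hopen₁ x).inter (hopen₂ (d j)))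
            ⟨w1, hw1.1, hw1.2⟩
          exact ⟨i, hi.1, hi.2⟩
        have hPC : PC (i, j) := by
          refine ⟨hi.2, fun p q h1 h2 h3 => step p q ?_ h2 ?_⟩
          · exact P.tr _ _ _ (P.slt_le hi.1) h1
          · exact P.tr _ _ _ h3 (P.slt_le hj.2)
        refine ⟨Sum.inr (i, j), ?_, ?_⟩
        · simp only [hG_def, Sum.elim_inr, hG2_def, dif_pos hPC]
          exact chainFun_eq_zero P hPC.1 hPC.2 (P.slt_le hi.1)
        · simp only [hG_def, Sum.elim_inr, hG2_def, dif_pos hPC]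
          exact chainFun_eq_one P (P.slt_le hj.2)
    refine Summable.tsum_lt_tsum (i := i₀)
      (fun i => mul_le_mul_of_nonneg_left (hGmono i x y (P.slt_le hxy)) (hεpos i).le)
      ?_ (hsum x) (hsum y)
    rw [h0, h1, mul_zero, mul_one]
    exact hεpos i₀
  refine ⟨u, hucont, fun x y => ⟨humono x y, ?_⟩⟩
  intro huxy
  by_contra hle
  exact absurd huxy (not_le.2 (hstrict y x hle))

end DebreuAux

open MeasureTheory Filter in
theorem stmt6' {Ω : Type*} [MeasurableSpace Ω] (μ : Measure Ω) [IsFiniteMeasure μ]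
    {E : Type*} [NormedAddCommGroup E] [NormedSpace ℝ E]
    [TopologicalSpace.SeparableSpace E]
    (m : VectorMeasure Ω E)
    (pref : {A : Set Ω // MeasurableSet A} → {A : Set Ω // MeasurableSet A} → Prop)
    (hcomplete : ∀ A B, pref A B ∨ pref B A)
    (htrans : ∀ A B C, pref A B → pref B C → pref A C)
    (hcong : ∀ A B, m A.1 = m B.1 → pref A B ∧ pref B A)
    (hcont₁ : ∀ (A B : {A : Set Ω // MeasurableSet A}) (Ak : ℕ → {A : Set Ω // MeasurableSet A}),
      (∀ k, pref (Ak k) B) →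
      Tendsto (fun k => m (Ak k).1) atTop (nhds (m A.1)) → pref A B)
    (hcont₂ : ∀ (A B : {A : Set Ω // MeasurableSet A}) (Bk : ℕ → {A : Set Ω // MeasurableSet A}),
      (∀ k, pref A (Bk k)) →
      Tendsto (fun k => m (Bk k).1) atTop (nhds (m B.1)) → pref A B) :
    ∃ φ : E → ℝ, ContinuousOn φ {x | ∃ A : {A : Set Ω // MeasurableSet A}, x = m A.1} ∧ φ 0 = 0 ∧
      ∀ A B : {A : Set Ω // MeasurableSet A}, (pref A B ↔ φ (m B.1) ≤ φ (m A.1)) := by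
  classical
  set S : Set E := {x | ∃ A : {A : Set Ω // MeasurableSet A}, x = m A.1} with hS_def
  have h0S : (0 : E) ∈ S := ⟨⟨∅, MeasurableSet.empty⟩, by simp⟩
  haveI : SecondCountableTopology E := UniformSpace.secondCountable_of_separable E
  haveI : Nonempty S := ⟨⟨0, h0S⟩⟩
  have hrep : ∀ x : S, ∃ A : {A : Set Ω // MeasurableSet A}, (x : E) = m A.1 := fun x => x.2
  choose σ hσ using hrep
  set le : S → S → Prop := fun x y => pref (σ y) (σ x) with hle_def
  have hsim : ∀ (x : S) (A : {A : Set Ω // MeasurableSet A}), (x : E) = m A.1 →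
      pref (σ x) A ∧ pref A (σ x) := by
    intro x A hx
    have : m (σ x).1 = m A.1 := by rw [← hσ x, ← hx]
    exact hcong _ _ this
  have P : DebreuAux.IsPref le := ⟨fun x y => hcomplete _ _,
    fun x y z h1 h2 => htrans _ _ _ h2 h1⟩
  have hval : ∀ (yk : ℕ → S) (y : S), Tendsto yk atTop (nhds y) →
      Tendsto (fun n => m (σ (yk n)).1) atTop (nhds (m (σ y).1)) := by
    intro yk y hlim
    have h1 : Tendsto (fun n => ((yk n : S) : E)) atTop (nhds (y : E)) :=
      (continuous_subtype_val.tendsto y).comp hlim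
    simpa only [← hσ] using h1
  have hcu : ∀ x : S, IsClosed {y | le x y} := by
    intro x
    apply IsSeqClosed.isClosed
    intro yk y hyk hlim
    exact hcont₁ (σ y) (σ x) (fun n => σ (yk n)) hyk (hval yk y hlim)
  have hcl : ∀ x : S, IsClosed {y | le y x} := by
    intro x
    apply IsSeqClosed.isClosed
    intro yk y hyk hlim
    exact hcont₂ (σ x) (σ y) (fun n => σ (yk n)) hyk (hval yk y hlim)
  obtain ⟨u, hucont, hurep⟩ := DebreuAux.debreu P hcu hcl
  refine ⟨fun e => if h : e ∈ S then u ⟨e, h⟩ - u ⟨0, h0S⟩ else 0, ?_, ?_, ?_⟩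
  · rw [continuousOn_iff_continuous_restrict]
    have hres : S.restrict (fun e => if h : e ∈ S then u ⟨e, h⟩ - u ⟨0, h0S⟩ else 0) =
        fun x : S => u x - u ⟨0, h0S⟩ := by
      ext x
      exact dif_pos x.2
    refine (congrArg Continuous hres).mpr ?_
    exact hucont.sub continuous_const
  · simp only [dif_pos h0S, sub_self]
  · intro A B
    have hA : m A.1 ∈ S := ⟨A, rfl⟩
    have hB : m B.1 ∈ S := ⟨B, rfl⟩
    simp only [dif_pos hA, dif_pos hB]
    have hiff := hurep ⟨m B.1, hB⟩ ⟨m A.1, hA⟩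
    have h1 := hsim ⟨m A.1, hA⟩ A rfl
    have h2 := hsim ⟨m B.1, hB⟩ B rfl
    constructor
    · intro hpref
      have hle : le ⟨m B.1, hB⟩ ⟨m A.1, hA⟩ :=
        htrans _ _ _ (htrans _ _ _ h1.1 hpref) h2.2
      have := hiff.1 hle
      linarith
    · intro hle'
      have hle : le ⟨m B.1, hB⟩ ⟨m A.1, hA⟩ := hiff.2 (by linarith)
      exact htrans _ _ _ (htrans _ _ _ h1.2 hle) h2.1


end Stmt6Aux

theorem stmt6 {Ω : Type*} [MeasurableSpace Ω] (μ : Measure Ω) [IsFiniteMeasure μ]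
    {E : Type*} [NormedAddCommGroup E] [NormedSpace ℝ E]
    [TopologicalSpace.SeparableSpace E]
    (m : VectorMeasure Ω E)
    (habs : ∀ N : Set Ω, μ N = 0 → ∀ A : Set Ω, MeasurableSet A → m (A ∩ N) = 0)
    -- `≿` is a preference relation on `Σ`: complete and transitive
    (pref : MSet Ω → MSet Ω → Prop)
    (hcomplete : ∀ A B, pref A B ∨ pref B A)
    (htrans : ∀ A B C, pref A B → pref B C → pref A C)
    -- vector representation: `m(A) = m(B)` implies `A ∼ B`
    (hcong : ∀ A B, m A.1 = m B.1 → pref A B ∧ pref B A)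
    -- continuity
    (hcont₁ : ∀ (A B : MSet Ω) (Ak : ℕ → MSet Ω), (∀ k, pref (Ak k) B) →
      Tendsto (fun k => m (Ak k).1) atTop (nhds (m A.1)) → pref A B)
    (hcont₂ : ∀ (A B : MSet Ω) (Bk : ℕ → MSet Ω), (∀ k, pref A (Bk k)) →
      Tendsto (fun k => m (Bk k).1) atTop (nhds (m B.1)) → pref A B) :
    ∃ φ : E → ℝ, ContinuousOn φ {x | ∃ A : MSet Ω, x = m A.1} ∧ φ 0 = 0 ∧
      ∀ A B : MSet Ω, (pref A B ↔ φ (m B.1) ≤ φ (m A.1)) := by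
  exact stmt6' μ m pref hcomplete htrans hcong hcont₁ hcont₂
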